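/- Let n ≥ 2 and let θ₁ > -(n-1) and θ₂ satisfy either θ₂ ≥ 0, or (θ₂ < 0 and θ₁ + θ₂ > -n). Then the weight w(x) = |x'|^{θ₁} |x|^{θ₂} on ℝⁿ (where x' = (x₁,…,x_{n-1})) is locally integrable, so dμ = w dx defines a Radon measure, and moreover there exists a constant C = C(n, θ₁, θ₂) > 0 such that for every R > 0, C⁻¹ R^{n+θ₁+θ₂} ≤ μ(B_R) ≤ C R^{n+θ₁+θ₂}, where B_R is the ball of radius R centered at the origin. -/

import Mathlib

open MeasureTheory

/-- The Euclidean norm of `x' = (x₁, …, x_{n-1})`, the first `n-1` coordinates of `x`. -/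
noncomputable def primeNorm (n : ℕ) (x : EuclideanSpace ℝ (Fin n)) : ℝ :=
  Real.sqrt (∑ i : Fin n, if (i : ℕ) < n - 1 then x i ^ 2 else 0)

/-- The anisotropic weight `w(x) = |x'|^θ₁ |x|^θ₂`. -/
noncomputable def anisoWeight (n : ℕ) (θ₁ θ₂ : ℝ) (x : EuclideanSpace ℝ (Fin n)) : ℝ :=
  primeNorm n x ^ θ₁ * ‖x‖ ^ θ₂

open Metric Set Module

namespace AnisoAux

variable {n : ℕ}

lemma primeNorm_nonneg (x : EuclideanSpace ℝ (Fin n)) : 0 ≤ primeNorm n x :=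
  Real.sqrt_nonneg _

lemma primeNorm_le_norm (x : EuclideanSpace ℝ (Fin n)) : primeNorm n x ≤ ‖x‖ := by
  rw [EuclideanSpace.norm_eq]
  apply Real.sqrt_le_sqrt
  apply Finset.sum_le_sum
  intro i _
  split_ifs
  · rw [Real.norm_eq_abs, sq_abs]
  · positivity

lemma abs_coord_le_norm (x : EuclideanSpace ℝ (Fin n)) (i : Fin n) : |x i| ≤ ‖x‖ := by
  rw [EuclideanSpace.norm_eq, ← Real.sqrt_sq_eq_abs]
  apply Real.sqrt_le_sqrt
  have := Finset.single_le_sum (f := fun j : Fin n => ‖x j‖ ^ 2)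
    (fun j _ => by positivity) (Finset.mem_univ i)
  simpa [Real.norm_eq_abs, sq_abs] using this

lemma abs_coord_le_primeNorm (x : EuclideanSpace ℝ (Fin n)) (i : Fin n) (hi : (i : ℕ) < n - 1) :
    |x i| ≤ primeNorm n x := by
  rw [← Real.sqrt_sq_eq_abs]
  apply Real.sqrt_le_sqrt
  have := Finset.single_le_sum (f := fun j : Fin n => if (j : ℕ) < n - 1 then x j ^ 2 else 0)
    (fun j _ => by positivity) (Finset.mem_univ i)
  simpa [hi] using this

lemma primeNorm_smul (r : ℝ) (x : EuclideanSpace ℝ (Fin n)) :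
    primeNorm n (r • x) = |r| * primeNorm n x := by
  unfold primeNorm
  have h : ∀ i : Fin n, (if (i : ℕ) < n - 1 then (r • x) i ^ 2 else 0)
      = r ^ 2 * (if (i : ℕ) < n - 1 then x i ^ 2 else 0) := by
    intro i
    have hsm : (r • x) i = r * x i := rfl
    split_ifs <;> simp [hsm, mul_pow]
  rw [Finset.sum_congr rfl (fun i _ => h i), ← Finset.mul_sum,
    Real.sqrt_mul (sq_nonneg r), Real.sqrt_sq_eq_abs]

lemma continuous_primeNorm : Continuous (primeNorm n) := by
  unfold primeNorm
  apply Real.continuous_sqrt.comp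
  apply continuous_finset_sum
  intro i _
  split_ifs
  · exact ((EuclideanSpace.proj (𝕜 := ℝ) i).continuous).pow 2
  · exact continuous_const

lemma measurable_aniso (θ₁ θ₂ : ℝ) : Measurable (anisoWeight n θ₁ θ₂) := by
  apply Measurable.mul
  · exact (continuous_primeNorm.measurable).pow measurable_const
  · exact (continuous_norm.measurable).pow measurable_const

lemma aniso_nonneg (θ₁ θ₂ : ℝ) (x : EuclideanSpace ℝ (Fin n)) :
    0 ≤ anisoWeight n θ₁ θ₂ x :=
  mul_nonneg (Real.rpow_nonneg (primeNorm_nonneg x) _) (Real.rpow_nonneg (norm_nonneg x) _)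

lemma coordZero_null (i : Fin n) :
    volume {x : EuclideanSpace ℝ (Fin n) | x i = 0} = 0 := by
  set L : EuclideanSpace ℝ (Fin n) →ₗ[ℝ] ℝ :=
    (EuclideanSpace.proj (𝕜 := ℝ) i : EuclideanSpace ℝ (Fin n) →L[ℝ] ℝ).toLinearMap
  have hker : LinearMap.ker L ≠ ⊤ := by
    intro h
    have hL0 : L = 0 := LinearMap.ker_eq_top.mp h
    have h1 : L (EuclideanSpace.single i 1) = 1 := by
      simp [L]
    rw [hL0] at h1
    simp at h1
  have hset : {x : EuclideanSpace ℝ (Fin n) | x i = 0} = (LinearMap.ker L : Set _) := by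
    ext x
    simp [L, LinearMap.mem_ker]
  rw [hset]
  exact Measure.addHaar_submodule volume _ hker

lemma zeroCoords_null :
    volume {x : EuclideanSpace ℝ (Fin n) | ∃ i, x i = 0} = 0 := by
  have h : {x : EuclideanSpace ℝ (Fin n) | ∃ i, x i = 0} = ⋃ i, {x | x i = 0} := by
    ext x; simp
  rw [h]
  exact measure_iUnion_null fun i => coordZero_null i

lemma oneDim {c : ℝ} (hc : -1 < c) :
    IntegrableOn (fun t : ℝ => |t| ^ c) (Set.Ioc (-1 : ℝ) 1) volume := by
  have h01 : IntervalIntegrable (fun t : ℝ => |t| ^ c) volume 0 1 := by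
    rw [intervalIntegrable_iff_integrableOn_Ioc_of_le (by norm_num : (0:ℝ) ≤ 1)]
    have h := (intervalIntegrable_iff_integrableOn_Ioc_of_le
      (by norm_num : (0:ℝ) ≤ 1)).mp (intervalIntegral.intervalIntegrable_rpow' hc (a := 0) (b := 1))
    exact h.congr_fun (fun t ht => by rw [abs_of_pos ht.1]) measurableSet_Ioc
  have hneg : IntervalIntegrable (fun t : ℝ => |t| ^ c) volume (-1) 0 := by
    have h := (IntervalIntegrable.iff_comp_neg (f := fun t : ℝ => |t| ^ c) (a := 0) (b := 1)).mp h01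
    simp only [abs_neg, neg_zero] at h
    exact h.symm
  have htot := hneg.trans h01
  rwa [intervalIntegrable_iff_integrableOn_Ioc_of_le (by norm_num : (-1:ℝ) ≤ 1)] at htot

lemma prod_integrable (c : Fin n → ℝ) (hc : ∀ i, -1 < c i) :
    Integrable (fun x : EuclideanSpace ℝ (Fin n) =>
      ∏ i, (Set.Ioc (-1 : ℝ) 1).indicator (fun t => |t| ^ c i) (x i)) volume := by
  have key : Integrable (fun y : Fin n → ℝ =>
      ∏ i, (Set.Ioc (-1 : ℝ) 1).indicator (fun t => |t| ^ c i) (y i)) volume :=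
    Integrable.fintype_prod (f := fun i => (Set.Ioc (-1 : ℝ) 1).indicator fun t => |t| ^ c i)
      (fun i => (integrable_indicator_iff measurableSet_Ioc).mpr (oneDim (hc i)))
  have e := EuclideanSpace.volume_preserving_symm_measurableEquiv_toLp (Fin n)
  exact (e.integrable_comp_emb (MeasurableEquiv.measurableEmbedding _)).mpr key

lemma aniso_smul {θ₁ θ₂ : ℝ} {r : ℝ} (hr : 0 < r) (x : EuclideanSpace ℝ (Fin n)) :
    anisoWeight n θ₁ θ₂ (r • x) = r ^ (θ₁ + θ₂) * anisoWeight n θ₁ θ₂ x := by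
  unfold anisoWeight
  rw [primeNorm_smul, norm_smul, Real.norm_eq_abs, abs_of_pos hr,
    Real.mul_rpow hr.le (primeNorm_nonneg x), Real.mul_rpow hr.le (norm_nonneg x),
    Real.rpow_add hr]
  ring

lemma indicator_ball_eq {θ₁ θ₂ : ℝ} {R : ℝ} (hR : 0 < R) (x : EuclideanSpace ℝ (Fin n)) :
    (ball (0 : EuclideanSpace ℝ (Fin n)) R).indicator (anisoWeight n θ₁ θ₂) x
      = R ^ (θ₁ + θ₂) *
        (ball (0 : EuclideanSpace ℝ (Fin n)) 1).indicator (anisoWeight n θ₁ θ₂) (R⁻¹ • x) := by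
  have hmem : x ∈ ball (0 : EuclideanSpace ℝ (Fin n)) R ↔
      R⁻¹ • x ∈ ball (0 : EuclideanSpace ℝ (Fin n)) 1 := by
    rw [mem_ball_zero_iff, mem_ball_zero_iff, norm_smul, Real.norm_eq_abs,
      abs_of_pos (inv_pos.mpr hR)]
    constructor
    · intro h
      nlinarith [inv_mul_cancel₀ hR.ne', mul_lt_mul_of_pos_left h (inv_pos.mpr hR)]
    · intro h
      nlinarith [inv_mul_cancel₀ hR.ne', mul_lt_mul_of_pos_left h hR, norm_nonneg x,
        inv_pos.mpr hR]
  by_cases hx : x ∈ ball (0 : EuclideanSpace ℝ (Fin n)) R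
  · rw [indicator_of_mem hx, indicator_of_mem (hmem.mp hx),
      aniso_smul (inv_pos.mpr hR), ← mul_assoc,
      Real.inv_rpow hR.le, mul_inv_cancel₀ (Real.rpow_pos_of_pos hR _).ne', one_mul]
  · rw [indicator_of_notMem hx, indicator_of_notMem (fun h => hx (hmem.mpr h)), mul_zero]

lemma pointwise_bound (hn : 2 ≤ n) {θ₁ θ₂ : ℝ} (hθ₁ : -((n : ℝ) - 1) < θ₁)
    (hθ₂ : 0 ≤ θ₂ ∨ (θ₂ < 0 ∧ -(n : ℝ) < θ₁ + θ₂)) :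
    ∃ c : Fin n → ℝ, (∀ i, -1 < c i) ∧
      ∀ x : EuclideanSpace ℝ (Fin n), (∀ i, x i ≠ 0) → ‖x‖ < 1 →
        anisoWeight n θ₁ θ₂ x ≤ ∏ i, |x i| ^ c i := by
  have hn1 : (1 : ℝ) ≤ (n : ℝ) - 1 := by
    have : (2 : ℝ) ≤ (n : ℝ) := by exact_mod_cast hn
    linarith
  -- first reduce to a bound of the form primeNorm^a * |x_{n-1}|^b
  obtain ⟨a, b, hb0, hb1, ha, hbnd⟩ :
      ∃ a b : ℝ, b ≤ 0 ∧ -1 < b ∧ -((n : ℝ) - 1) < a ∧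
        ∀ x : EuclideanSpace ℝ (Fin n), (∀ i, x i ≠ 0) → ‖x‖ < 1 →
          anisoWeight n θ₁ θ₂ x
            ≤ primeNorm n x ^ a * |x ⟨n - 1, by omega⟩| ^ b := by
    rcases hθ₂ with hpos | ⟨hneg, hsum⟩
    · refine ⟨θ₁, 0, le_refl 0, by norm_num, hθ₁, ?_⟩
      intro x hx0 hx1
      have hP : 0 < primeNorm n x := by
        have h0 : ((⟨0, by omega⟩ : Fin n) : ℕ) < n - 1 := by show (0:ℕ) < n - 1; omega
        exact lt_of_lt_of_le (abs_pos.mpr (hx0 ⟨0, by omega⟩))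
          (abs_coord_le_primeNorm x _ h0)
      rw [Real.rpow_zero, mul_one]
      unfold anisoWeight
      have hle : ‖x‖ ^ θ₂ ≤ 1 := Real.rpow_le_one (norm_nonneg x) hx1.le hpos
      nlinarith [Real.rpow_nonneg (primeNorm_nonneg x) θ₁,
        Real.rpow_nonneg (norm_nonneg x) θ₂]
    · set L := max (-1 : ℝ) θ₂ with hL
      set U := min (0 : ℝ) ((n : ℝ) - 1 + θ₁ + θ₂) with hU
      have hLU : L < U := by
        rw [hL, hU]
        rw [max_lt_iff, lt_min_iff, lt_min_iff]
        constructor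
        · exact ⟨by linarith, by linarith⟩
        · exact ⟨by linarith, by linarith⟩
      set b := (L + U) / 2 with hbdef
      have hLb : L < b := by rw [hbdef]; linarith
      have hbU : b < U := by rw [hbdef]; linarith
      have hb1' : -1 < b := lt_of_le_of_lt (le_max_left _ _) hLb
      have hθb : θ₂ ≤ b := le_of_lt (lt_of_le_of_lt (le_max_right _ _) hLb)
      have hb0' : b ≤ 0 := le_of_lt (lt_of_lt_of_le hbU (min_le_left _ _))
      have hbn : b < (n : ℝ) - 1 + θ₁ + θ₂ := lt_of_lt_of_le hbU (min_le_right _ _)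
      refine ⟨θ₁ + θ₂ - b, b, hb0', hb1', by linarith, ?_⟩
      intro x hx0 hx1
      set m : Fin n := ⟨n - 1, by omega⟩
      have hP : 0 < primeNorm n x := by
        have h0 : ((⟨0, by omega⟩ : Fin n) : ℕ) < n - 1 := by show (0:ℕ) < n - 1; omega
        exact lt_of_lt_of_le (abs_pos.mpr (hx0 ⟨0, by omega⟩))
          (abs_coord_le_primeNorm x _ h0)
      have hPN : primeNorm n x ≤ ‖x‖ := primeNorm_le_norm x
      have hN : 0 < ‖x‖ := lt_of_lt_of_le hP hPN
      have hm : 0 < |x m| := abs_pos.mpr (hx0 m)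
      have hmN : |x m| ≤ ‖x‖ := abs_coord_le_norm x m
      have h1 : ‖x‖ ^ (θ₂ - b) ≤ primeNorm n x ^ (θ₂ - b) :=
        Real.rpow_le_rpow_of_nonpos hP hPN (by linarith)
      have h2 : ‖x‖ ^ b ≤ |x m| ^ b :=
        Real.rpow_le_rpow_of_nonpos hm hmN hb0'
      have hsplit : ‖x‖ ^ θ₂ = ‖x‖ ^ (θ₂ - b) * ‖x‖ ^ b := by
        rw [← Real.rpow_add hN]; ring_nf
      unfold anisoWeight
      rw [hsplit]
      have hkey : ‖x‖ ^ (θ₂ - b) * ‖x‖ ^ b ≤ primeNorm n x ^ (θ₂ - b) * |x m| ^ b := by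
        apply mul_le_mul h1 h2 (Real.rpow_nonneg (norm_nonneg x) b)
          (Real.rpow_nonneg (primeNorm_nonneg x) _)
      calc primeNorm n x ^ θ₁ * (‖x‖ ^ (θ₂ - b) * ‖x‖ ^ b)
          ≤ primeNorm n x ^ θ₁ * (primeNorm n x ^ (θ₂ - b) * |x m| ^ b) :=
            mul_le_mul_of_nonneg_left hkey (Real.rpow_nonneg (primeNorm_nonneg x) θ₁)
        _ = primeNorm n x ^ (θ₁ + θ₂ - b) * |x m| ^ b := by
            rw [← mul_assoc, ← Real.rpow_add hP]; ring_nf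
  -- now the product bound
  set a' := min a 0 with ha'
  set d := a' / ((n : ℝ) - 1) with hd
  have ha'lt : -((n : ℝ) - 1) < a' := lt_min ha (by linarith)
  have ha'0 : a' ≤ 0 := min_le_right _ _
  have hd1 : -1 < d := by
    rw [hd, lt_div_iff₀ (by linarith : (0:ℝ) < (n : ℝ) - 1)]
    linarith
  have hd0 : d ≤ 0 := div_nonpos_of_nonpos_of_nonneg ha'0 (by linarith)
  refine ⟨fun i => if (i : ℕ) < n - 1 then d else b, fun i => by dsimp only; split_ifs <;>
    [exact hd1; exact hb1], ?_⟩
  intro x hx0 hx1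
  set m : Fin n := ⟨n - 1, by omega⟩
  set P := primeNorm n x with hPdef
  have hP : 0 < P := by
    have h0 : ((⟨0, by omega⟩ : Fin n) : ℕ) < n - 1 := by show (0:ℕ) < n - 1; omega
    exact lt_of_lt_of_le (abs_pos.mpr (hx0 ⟨0, by omega⟩)) (abs_coord_le_primeNorm x _ h0)
  have hP1 : P < 1 := lt_of_le_of_lt (primeNorm_le_norm x) hx1
  have hmval : ((m : Fin n) : ℕ) = n - 1 := rfl
  set s := Finset.univ.filter (fun i : Fin n => (i : ℕ) < n - 1) with hs
  have hsnot : Finset.univ.filter (fun i : Fin n => ¬ (i : ℕ) < n - 1) = {m} := by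
    ext i
    simp only [Finset.mem_filter, Finset.mem_univ, true_and, Finset.mem_singleton]
    constructor
    · intro h
      have hi := i.isLt
      exact Fin.ext (by rw [hmval]; omega)
    · intro h
      subst h
      rw [hmval]
      omega
  have hscard : s.card = n - 1 := by
    have h := Finset.card_filter_add_card_filter_not
      (s := Finset.univ) (p := fun i : Fin n => (i : ℕ) < n - 1)
    rw [hsnot] at h
    simp only [Finset.card_singleton, Finset.card_univ, Fintype.card_fin] at h
    rw [← hs] at h
    omega
  have hprodpos : 0 < ∏ i ∈ s, |x i| :=
    Finset.prod_pos fun i _ => abs_pos.mpr (hx0 i)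
  have hprodle : ∏ i ∈ s, |x i| ≤ P ^ s.card := by
    rw [← Finset.prod_const]
    exact Finset.prod_le_prod (fun i _ => abs_nonneg _)
      (fun i hi => abs_coord_le_primeNorm x i (by
        rw [hs] at hi; exact (Finset.mem_filter.mp hi).2))
  have hPa' : P ^ a' ≤ ∏ i ∈ s, |x i| ^ d := by
    have hcast : ((s.card : ℕ) : ℝ) = (n : ℝ) - 1 := by
      rw [hscard]; push_cast [Nat.cast_sub (by omega : 1 ≤ n)]; ring
    have heq : ((P ^ s.card : ℝ)) ^ d = P ^ a' := by
      rw [← Real.rpow_natCast P s.card, ← Real.rpow_mul hP.le, hcast, hd]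
      congr 1
      field_simp
    have hle : ((P ^ s.card : ℝ)) ^ d ≤ (∏ i ∈ s, |x i|) ^ d :=
      Real.rpow_le_rpow_of_nonpos hprodpos hprodle hd0
    rw [heq] at hle
    rwa [Real.finset_prod_rpow s _ (fun i _ => abs_nonneg _) d]
  have hPaa' : P ^ a ≤ P ^ a' := by
    have : P ^ a = P ^ (a - a') * P ^ a' := by rw [← Real.rpow_add hP]; ring_nf
    rw [this]
    have h1 : P ^ (a - a') ≤ 1 :=
      Real.rpow_le_one hP.le hP1.le (by simp [ha'])
    nlinarith [Real.rpow_pos_of_pos hP a', Real.rpow_nonneg hP.le (a - a')]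
  have hbndx := hbnd x hx0 hx1
  have hm : 0 ≤ |x m| ^ b := Real.rpow_nonneg (abs_nonneg _) b
  calc anisoWeight n θ₁ θ₂ x ≤ P ^ a * |x m| ^ b := hbndx
    _ ≤ (∏ i ∈ s, |x i| ^ d) * |x m| ^ b :=
        mul_le_mul_of_nonneg_right (le_trans hPaa' hPa') hm
    _ = ∏ i, |x i| ^ (if (i : ℕ) < n - 1 then d else b) := by
        rw [← Finset.prod_filter_mul_prod_filter_not Finset.univ
          (fun i : Fin n => (i : ℕ) < n - 1) (fun i => |x i| ^ (if (i : ℕ) < n - 1 then d else b))]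
        rw [hsnot, Finset.prod_singleton]
        congr 1
        · apply Finset.prod_congr rfl
          intro i hi
          rw [hs] at hi
          rw [if_pos (Finset.mem_filter.mp hi).2]
        · rw [if_neg (by rw [hmval]; omega)]

lemma integrableOn_ball_one (hn : 2 ≤ n) {θ₁ θ₂ : ℝ} (hθ₁ : -((n : ℝ) - 1) < θ₁)
    (hθ₂ : 0 ≤ θ₂ ∨ (θ₂ < 0 ∧ -(n : ℝ) < θ₁ + θ₂)) :
    IntegrableOn (anisoWeight n θ₁ θ₂) (ball (0 : EuclideanSpace ℝ (Fin n)) 1) volume := by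
  obtain ⟨c, hc, hbnd⟩ := pointwise_bound hn hθ₁ hθ₂
  rw [← integrable_indicator_iff measurableSet_ball]
  refine Integrable.mono' (prod_integrable c hc) ?_ ?_
  · exact ((measurable_aniso θ₁ θ₂).indicator measurableSet_ball).aestronglyMeasurable
  · have hae : ∀ᵐ x : EuclideanSpace ℝ (Fin n) ∂volume, ∀ i, x i ≠ 0 := by
      have := zeroCoords_null (n := n)
      rw [← compl_mem_ae_iff] at this
      filter_upwards [this] with x hx
      intro i hi
      exact hx ⟨i, hi⟩
    filter_upwards [hae] with x hx
    by_cases hxb : x ∈ ball (0 : EuclideanSpace ℝ (Fin n)) 1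
    · rw [indicator_of_mem hxb, Real.norm_eq_abs, abs_of_nonneg (aniso_nonneg θ₁ θ₂ x)]
      have hx1 : ‖x‖ < 1 := mem_ball_zero_iff.mp hxb
      refine le_trans (hbnd x hx hx1) (le_of_eq ?_)
      apply Finset.prod_congr rfl
      intro i _
      rw [indicator_of_mem]
      constructor
      · have := abs_coord_le_norm x i
        have : |x i| < 1 := lt_of_le_of_lt (abs_coord_le_norm x i) hx1
        linarith [abs_lt.mp this |>.1]
      · have : |x i| < 1 := lt_of_le_of_lt (abs_coord_le_norm x i) hx1
        linarith [abs_lt.mp this |>.2]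
    · rw [indicator_of_notMem hxb]
      simp only [norm_zero]
      apply Finset.prod_nonneg
      intro i _
      apply Set.indicator_nonneg
      intro t _
      exact Real.rpow_nonneg (abs_nonneg t) _

lemma integrableOn_ball (hn : 2 ≤ n) {θ₁ θ₂ : ℝ} (hθ₁ : -((n : ℝ) - 1) < θ₁)
    (hθ₂ : 0 ≤ θ₂ ∨ (θ₂ < 0 ∧ -(n : ℝ) < θ₁ + θ₂)) {R : ℝ} (hR : 0 < R) :
    IntegrableOn (anisoWeight n θ₁ θ₂) (ball (0 : EuclideanSpace ℝ (Fin n)) R) volume := by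
  rw [← integrable_indicator_iff measurableSet_ball]
  have hfun : (ball (0 : EuclideanSpace ℝ (Fin n)) R).indicator (anisoWeight n θ₁ θ₂)
      = fun x => R ^ (θ₁ + θ₂) *
        (ball (0 : EuclideanSpace ℝ (Fin n)) 1).indicator (anisoWeight n θ₁ θ₂) (R⁻¹ • x) :=
    funext fun x => indicator_ball_eq hR x
  rw [hfun]
  exact (((integrable_indicator_iff measurableSet_ball).mpr
    (integrableOn_ball_one hn hθ₁ hθ₂)).comp_smul (inv_ne_zero hR.ne')).const_mul _

lemma integral_ball_smul {θ₁ θ₂ : ℝ} {R : ℝ} (hR : 0 < R) :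
    ∫ x in ball (0 : EuclideanSpace ℝ (Fin n)) R, anisoWeight n θ₁ θ₂ x
      = R ^ ((n : ℝ) + θ₁ + θ₂) *
        ∫ x in ball (0 : EuclideanSpace ℝ (Fin n)) 1, anisoWeight n θ₁ θ₂ x := by
  rw [← integral_indicator measurableSet_ball]
  have hfun : ∀ x, (ball (0 : EuclideanSpace ℝ (Fin n)) R).indicator (anisoWeight n θ₁ θ₂) x
      = R ^ (θ₁ + θ₂) *
        (ball (0 : EuclideanSpace ℝ (Fin n)) 1).indicator (anisoWeight n θ₁ θ₂) (R⁻¹ • x) :=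
    fun x => indicator_ball_eq hR x
  simp_rw [hfun]
  rw [integral_const_mul,
    Measure.integral_comp_inv_smul_of_nonneg volume
      ((ball (0 : EuclideanSpace ℝ (Fin n)) 1).indicator (anisoWeight n θ₁ θ₂)) hR.le,
    finrank_euclideanSpace_fin, integral_indicator measurableSet_ball, smul_eq_mul]
  have hpow : R ^ ((n : ℝ) + θ₁ + θ₂) = R ^ (n : ℕ) * R ^ (θ₁ + θ₂) := by
    rw [← Real.rpow_natCast R n, ← Real.rpow_add hR]
    ring_nf
  rw [hpow]
  ring

lemma integral_ball_one_pos (hn : 2 ≤ n) {θ₁ θ₂ : ℝ} (hθ₁ : -((n : ℝ) - 1) < θ₁)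
    (hθ₂ : 0 ≤ θ₂ ∨ (θ₂ < 0 ∧ -(n : ℝ) < θ₁ + θ₂)) :
    0 < ∫ x in ball (0 : EuclideanSpace ℝ (Fin n)) 1, anisoWeight n θ₁ θ₂ x := by
  rw [setIntegral_pos_iff_support_of_nonneg_ae
    (Filter.Eventually.of_forall fun x => aniso_nonneg θ₁ θ₂ x)
    (integrableOn_ball_one hn hθ₁ hθ₂)]
  have hsub : ball (0 : EuclideanSpace ℝ (Fin n)) 1 \ {x | ∃ i, x i = 0}
      ⊆ Function.support (anisoWeight n θ₁ θ₂) ∩ ball 0 1 := by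
    rintro x ⟨hx, hx0⟩
    refine ⟨?_, hx⟩
    have hx0' : ∀ i, x i ≠ 0 := by
      intro i hi; exact hx0 ⟨i, hi⟩
    have h0 : ((⟨0, by omega⟩ : Fin n) : ℕ) < n - 1 := by show (0:ℕ) < n - 1; omega
    have hP : 0 < primeNorm n x :=
      lt_of_lt_of_le (abs_pos.mpr (hx0' ⟨0, by omega⟩)) (abs_coord_le_primeNorm x _ h0)
    have hN : 0 < ‖x‖ := lt_of_lt_of_le hP (primeNorm_le_norm x)
    exact (mul_pos (Real.rpow_pos_of_pos hP θ₁) (Real.rpow_pos_of_pos hN θ₂)).ne'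
  calc (0 : ENNReal) < volume (ball (0 : EuclideanSpace ℝ (Fin n)) 1) :=
        measure_ball_pos _ _ one_pos
    _ = volume (ball (0 : EuclideanSpace ℝ (Fin n)) 1 \ {x | ∃ i, x i = 0}) :=
        (measure_diff_null zeroCoords_null).symm
    _ ≤ volume (Function.support (anisoWeight n θ₁ θ₂) ∩ ball 0 1) := measure_mono hsub

end AnisoAux

open AnisoAux

/-- For `n ≥ 2`, `θ₁ > -(n-1)` and either `θ₂ ≥ 0` or (`θ₂ < 0` and `θ₁ + θ₂ > -n`), the weight
`w(x) = |x'|^θ₁ |x|^θ₂` is locally integrable (so `w dx` is a Radon measure), and there is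
`C = C(n,θ₁,θ₂) > 0` with `C⁻¹ R^(n+θ₁+θ₂) ≤ μ(B_R) ≤ C R^(n+θ₁+θ₂)` for all `R > 0`. -/
theorem stmt2 (n : ℕ) (hn : 2 ≤ n) (θ₁ θ₂ : ℝ) (hθ₁ : -((n : ℝ) - 1) < θ₁)
    (hθ₂ : 0 ≤ θ₂ ∨ (θ₂ < 0 ∧ -(n : ℝ) < θ₁ + θ₂)) :
    LocallyIntegrable (anisoWeight n θ₁ θ₂) volume ∧
    ∃ C > 0, ∀ R > (0 : ℝ),
      C⁻¹ * R ^ ((n : ℝ) + θ₁ + θ₂)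
          ≤ ∫ x in Metric.ball (0 : EuclideanSpace ℝ (Fin n)) R, anisoWeight n θ₁ θ₂ x ∧
      ∫ x in Metric.ball (0 : EuclideanSpace ℝ (Fin n)) R, anisoWeight n θ₁ θ₂ x
          ≤ C * R ^ ((n : ℝ) + θ₁ + θ₂) := by
  constructor
  · intro x
    refine ⟨Metric.ball 0 (‖x‖ + 1), ?_, integrableOn_ball hn hθ₁ hθ₂ (by positivity)⟩
    exact Metric.isOpen_ball.mem_nhds (by rw [Metric.mem_ball, dist_zero_right]; linarith)
  · set I := ∫ x in Metric.ball (0 : EuclideanSpace ℝ (Fin n)) 1, anisoWeight n θ₁ θ₂ x with hI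
    have hIpos : 0 < I := integral_ball_one_pos hn hθ₁ hθ₂
    refine ⟨max I I⁻¹, lt_of_lt_of_le hIpos (le_max_left _ _), ?_⟩
    intro R hR
    have hscale := integral_ball_smul (n := n) (θ₁ := θ₁) (θ₂ := θ₂) hR
    have hRs : 0 < R ^ ((n : ℝ) + θ₁ + θ₂) := Real.rpow_pos_of_pos hR _
    have h1 : (max I I⁻¹)⁻¹ ≤ I := by
      have h := inv_anti₀ (inv_pos.mpr hIpos) (le_max_right I I⁻¹)
      rwa [inv_inv] at h
    have h2 : I ≤ max I I⁻¹ := le_max_left _ _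
    constructor
    · rw [hscale, ← hI]
      nlinarith
    · rw [hscale, ← hI]
      nlinarith
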